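/- Let k ≥ 3, s_c = 1 - 2/k, φ₁ a fixed nonzero Schwartz function on ℝ², and for m ∈ ℕ set c₁ = m+1, c₂ = m. For fixed t > 0, define u_{c}(x,y,t) = φ_c(x - ct, y) where φ_c(x,y) = c^{1/k}φ₁(√c x, √c y). Then ⟨u_{c₁}(t), u_{c₂}(t)⟩_{Ḣ^{s_c}} → 0 as m → ∞. -/

import Mathlib

open MeasureTheory Filter
open scoped FourierTransform Topology

noncomputable section

abbrev E2 := EuclideanSpace ℝ (Fin 2)

/-- Homogeneous Sobolev inner product `⟨f,g⟩_{Ḣ^s}`. -/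
def homInner (s : ℝ) (f g : E2 → ℂ) : ℂ :=
  ∫ ξ : E2, (‖ξ‖ ^ (2 * s) : ℝ) • (𝓕 f ξ * (starRingEnd ℂ) (𝓕 g ξ))

/-- The travelling solitary wave at time `t`:
`u_c(x,y,t) = φ_c(x - ct, y)` with `φ_c(x,y) = c^{1/k} φ₁(√c x, √c y)`. -/
def travWave (k : ℕ) (φ₁ : SchwartzMap E2 ℂ) (c t : ℝ) : E2 → ℂ :=
  fun p => (c ^ ((1 : ℝ) / k) : ℝ) •
    φ₁ (Real.sqrt c • (p - (c * t) • (EuclideanSpace.single (0 : Fin 2) (1 : ℝ))))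

section Aux

open Real ComplexConjugate
open scoped RealInnerProductSpace

lemma fourier_dilate (f : E2 → ℂ) (r : ℝ) (hr : 0 < r) (ξ : E2) :
    𝓕 (fun p => f (r • p)) ξ = ((r ^ 2)⁻¹ : ℝ) • 𝓕 f (r⁻¹ • ξ) := by
  rw [Real.fourier_eq, Real.fourier_eq]
  have key := MeasureTheory.Measure.integral_comp_smul volume
    (fun q : E2 => (𝐞 (-⟪q, r⁻¹ • ξ⟫) : Circle) • f q) r
  simp only [finrank_euclideanSpace, Fintype.card_fin] at key
  have h1 : (∫ p : E2, (𝐞 (-⟪p, ξ⟫) : Circle) • f (r • p))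
      = ∫ p : E2, (𝐞 (-⟪r • p, r⁻¹ • ξ⟫) : Circle) • f (r • p) := by
    congr 1; ext p
    congr 2
    rw [real_inner_smul_left, real_inner_smul_right]
    field_simp
  rw [h1, key, abs_of_nonneg (inv_nonneg.2 (sq_nonneg r))]

lemma fourier_travWave (k : ℕ) (φ₁ : SchwartzMap E2 ℂ) (c t : ℝ) (hc : 0 < c) (ξ : E2) :
    𝓕 (travWave k φ₁ c t) ξ
      = ((c ^ ((1 : ℝ) / k) * c⁻¹ : ℝ)) •
        ((𝐞 (-(c * t * ξ 0)) : ℂ) * 𝓕 (⇑φ₁) ((Real.sqrt c)⁻¹ • ξ)) := by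
  set v : E2 := (c * t) • (EuclideanSpace.single (0 : Fin 2) (1 : ℝ)) with hv
  have hinner : ⟪v, ξ⟫ = c * t * ξ 0 := by
    rw [hv, real_inner_smul_left, EuclideanSpace.inner_single_left]
    simp
  set A : ℝ := c ^ ((1 : ℝ) / k)
  have step1 : 𝓕 (travWave k φ₁ c t) ξ
      = (𝐞 (-⟪v, ξ⟫) : ℂ) * (A • 𝓕 (fun q : E2 => (φ₁ (Real.sqrt c • q) : ℂ)) ξ) := by
    rw [Real.fourier_eq]
    have htrans := MeasureTheory.integral_add_right_eq_self
      (μ := (volume : Measure E2))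
      (f := fun p : E2 => (𝐞 (-⟪p, ξ⟫) : Circle) • travWave k φ₁ c t p) v
    rw [← htrans]
    have : ∀ q : E2, (𝐞 (-⟪q + v, ξ⟫) : Circle) • travWave k φ₁ c t (q + v)
        = (𝐞 (-⟪v, ξ⟫) : ℂ) * (A • ((𝐞 (-⟪q, ξ⟫) : Circle) • (φ₁ (Real.sqrt c • q) : ℂ))) := by
      intro q
      have hq : q + v - v = q := by abel
      simp only [travWave, ← hv, hq, Circle.smul_def, inner_add_left, neg_add]
      rw [AddChar.map_add_eq_mul]
      simp only [Circle.coe_mul, smul_eq_mul, Complex.real_smul]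
      simp only [A, one_div]
      ring
    simp_rw [this]
    rw [MeasureTheory.integral_const_mul, integral_smul, ← Real.fourier_eq]
  rw [step1, fourier_dilate _ _ (Real.sqrt_pos.2 hc), hinner, Real.sq_sqrt hc.le]
  simp only [Complex.real_smul]
  push_cast
  ring

lemma cont_rpow_norm (s : ℝ) (hs : 0 < s) : Continuous (fun η : E2 => (‖η‖ ^ (2*s) : ℝ)) := by
  have : Continuous (fun x : ℝ => x ^ (2*s)) := by
    rw [continuous_iff_continuousAt]
    intro x
    exact Real.continuousAt_rpow_const x (2*s) (Or.inr (by positivity))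
  exact this.comp continuous_norm

lemma integrable_rpow_norm_mul (s : ℝ) (hs0 : 0 < s) (hs1 : s ≤ 1) (ψ : SchwartzMap E2 ℂ) :
    Integrable (fun η : E2 => ‖η‖ ^ (2*s) * ‖ψ η‖) volume := by
  refine Integrable.mono' ((ψ.integrable (μ := volume)).norm.add (ψ.integrable_pow_mul volume 2))
    ((cont_rpow_norm s hs0).mul ψ.continuous.norm).aestronglyMeasurable
    (Filter.Eventually.of_forall fun η => ?_)
  have h1 : ‖η‖ ^ (2*s) ≤ 1 + ‖η‖ ^ 2 := by
    rcases le_or_gt ‖η‖ 1 with h | h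
    · have := Real.rpow_le_one (z := 2*s) (norm_nonneg η) h (by positivity)
      nlinarith [sq_nonneg ‖η‖]
    · have h2 : ‖η‖ ^ (2*s) ≤ ‖η‖ ^ (((2:ℕ):ℝ)) :=
        Real.rpow_le_rpow_of_exponent_le h.le (by push_cast; linarith)
      rw [Real.rpow_natCast] at h2
      linarith
  have h0 : (0:ℝ) ≤ ‖η‖ ^ (2*s) := Real.rpow_nonneg (norm_nonneg η) _
  rw [Real.norm_eq_abs, abs_of_nonneg (by positivity)]
  simp only [Pi.add_apply]
  nlinarith [norm_nonneg (ψ η)]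

lemma aux_tendsto (s : ℝ) (hs0 : 0 < s) (hs1 : s ≤ 1) (ψ : SchwartzMap E2 ℂ)
    (w : ℕ → E2) (hw : Tendsto w atTop (cocompact E2))
    (ρ : ℕ → ℝ) (hρ : Tendsto ρ atTop (𝓝 1)) :
    Tendsto (fun m => ∫ η : E2, (𝐞 (-⟪η, w m⟫) : Circle) •
      ((‖η‖ ^ (2*s) : ℝ) • (ψ η * conj (ψ (ρ m • η))))) atTop (𝓝 0) := by
  set M : ℝ := SchwartzMap.seminorm ℝ 0 0 ψ with hMdef
  have hM : ∀ x : E2, ‖ψ x‖ ≤ M := fun x => ψ.norm_le_seminorm ℝ x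
  have hM0 : 0 ≤ M := le_trans (norm_nonneg _) (hM 0)
  set g : ℝ → E2 → ℂ := fun r η => (‖η‖ ^ (2*s) : ℝ) • (ψ η * conj (ψ (r • η))) with hgdef
  have hgnorm : ∀ (r : ℝ) (η : E2), ‖g r η‖ ≤ M * (‖η‖ ^ (2*s) * ‖ψ η‖) := by
    intro r η
    rw [hgdef]
    simp only [norm_smul, norm_mul, RCLike.norm_conj, Real.norm_eq_abs,
      abs_of_nonneg (Real.rpow_nonneg (norm_nonneg η) _)]
    have hMr := hM (r • η)
    have h0 : (0:ℝ) ≤ ‖η‖ ^ (2*s) := Real.rpow_nonneg (norm_nonneg η) _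
    calc ‖η‖ ^ (2*s) * (‖ψ η‖ * ‖ψ (r • η)‖)
        = (‖η‖ ^ (2*s) * ‖ψ η‖) * ‖ψ (r • η)‖ := by ring
      _ ≤ (‖η‖ ^ (2*s) * ‖ψ η‖) * M :=
          mul_le_mul_of_nonneg_left hMr (by positivity)
      _ = M * (‖η‖ ^ (2*s) * ‖ψ η‖) := by ring
  have hbase := integrable_rpow_norm_mul s hs0 hs1 ψ
  have hgcont : ∀ r : ℝ, Continuous (g r) := by
    intro r
    exact (cont_rpow_norm s hs0).smul (ψ.continuous.mul
      (Complex.continuous_conj.comp (ψ.continuous.comp (continuous_const_smul r))))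
  have hgint : ∀ r : ℝ, Integrable (g r) volume := by
    intro r
    refine (hbase.const_mul M).mono' (hgcont r).aestronglyMeasurable
      (Filter.Eventually.of_forall fun η => ?_)
    exact hgnorm r η
  have hJ : Tendsto (fun m => ∫ η : E2, (𝐞 (-⟪η, w m⟫) : Circle) • g 1 η) atTop (𝓝 0) :=
    (tendsto_integral_exp_inner_smul_cocompact (f := g 1)).comp hw
  have hdiff : Tendsto (fun m => ∫ η : E2, ‖g (ρ m) η - g 1 η‖) atTop (𝓝 0) := by
    have := MeasureTheory.tendsto_integral_of_dominated_convergence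
      (F := fun m (η : E2) => ‖g (ρ m) η - g 1 η‖) (f := fun _ => (0:ℝ))
      (bound := fun η => 2 * M * (‖η‖ ^ (2*s) * ‖ψ η‖)) (μ := volume)
      (fun m => ((hgcont (ρ m)).sub (hgcont 1)).norm.aestronglyMeasurable)
      (by simpa [mul_assoc] using (hbase.const_mul (2 * M)))
      (fun m => Filter.Eventually.of_forall fun η => by
        have h1 := hgnorm (ρ m) η
        have h2 := hgnorm 1 η
        have h3 := norm_sub_le (g (ρ m) η) (g 1 η)
        rw [Real.norm_eq_abs, abs_of_nonneg (norm_nonneg _)]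
        linarith)
      (Filter.Eventually.of_forall fun η => by
        have hsm : Tendsto (fun m => ρ m • η) atTop (𝓝 η) := by
          simpa using hρ.smul_const η
        have : Tendsto (fun m => g (ρ m) η) atTop (𝓝 (g 1 η)) := by
          rw [hgdef]
          simp only [one_smul]
          exact tendsto_const_nhds.smul (tendsto_const_nhds.mul
            ((Complex.continuous_conj.tendsto _).comp (ψ.continuous.tendsto η |>.comp hsm)))
        simpa using (tendsto_iff_norm_sub_tendsto_zero.mp this))
    simpa using this
  have key : ∀ m, ‖(∫ η : E2, (𝐞 (-⟪η, w m⟫) : Circle) • g (ρ m) η)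
      - ∫ η : E2, (𝐞 (-⟪η, w m⟫) : Circle) • g 1 η‖ ≤ ∫ η : E2, ‖g (ρ m) η - g 1 η‖ := by
    intro m
    rw [← integral_sub ((Real.fourierIntegral_convergent_iff (w m)).2 (hgint (ρ m)))
      ((Real.fourierIntegral_convergent_iff (w m)).2 (hgint 1))]
    refine le_trans (norm_integral_le_integral_norm _) (le_of_eq ?_)
    congr 1; ext η
    rw [← smul_sub, Circle.norm_smul]
  have hIJ : Tendsto (fun m => (∫ η : E2, (𝐞 (-⟪η, w m⟫) : Circle) • g (ρ m) η)
      - ∫ η : E2, (𝐞 (-⟪η, w m⟫) : Circle) • g 1 η) atTop (𝓝 0) :=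
    squeeze_zero_norm key hdiff
  have := hIJ.add hJ
  simpa [hgdef] using this

lemma scalar_id (k : ℕ) (hk : 3 ≤ k) (a b : ℝ) (ha : 0 < a) (hb : 0 < b) :
    (a ^ ((1:ℝ)/k) * a⁻¹) * (b ^ ((1:ℝ)/k) * b⁻¹) * (a * Real.sqrt a ^ (2*(1 - 2/(k:ℝ))))
      = (a/b) ^ (1 - 1/(k:ℝ)) := by
  have hs : Real.sqrt a ^ (2*(1 - 2/(k:ℝ))) = a ^ ((1:ℝ) - 2/(k:ℝ)) := by
    rw [Real.sqrt_eq_rpow, ← Real.rpow_mul ha.le]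
    congr 1; ring
  rw [hs]
  have hha : a ^ ((1:ℝ)/k) * a⁻¹ * (a * a ^ ((1:ℝ) - 2/(k:ℝ))) = a ^ (1 - 1/(k:ℝ)) := by
    rw [show a ^ ((1:ℝ)/k) * a⁻¹ * (a * a ^ ((1:ℝ) - 2/(k:ℝ)))
        = (a⁻¹ * a) * (a ^ ((1:ℝ)/k) * a ^ ((1:ℝ) - 2/(k:ℝ))) by ring,
      inv_mul_cancel₀ ha.ne', one_mul, ← Real.rpow_add ha]
    congr 1; ring
  have hhb : b ^ ((1:ℝ)/k) * b⁻¹ = b ^ (-(1 - 1/(k:ℝ))) := by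
    rw [show b⁻¹ = b ^ (-1:ℝ) by rw [Real.rpow_neg_one], ← Real.rpow_add hb]
    congr 1; ring
  calc (a ^ ((1:ℝ)/k) * a⁻¹) * (b ^ ((1:ℝ)/k) * b⁻¹) * (a * a ^ ((1:ℝ) - 2/(k:ℝ)))
      = (a ^ ((1:ℝ)/k) * a⁻¹ * (a * a ^ ((1:ℝ) - 2/(k:ℝ)))) * (b ^ ((1:ℝ)/k) * b⁻¹) := by ring
    _ = a ^ (1 - 1/(k:ℝ)) * b ^ (-(1 - 1/(k:ℝ))) := by rw [hha, hhb]
    _ = (a/b) ^ (1 - 1/(k:ℝ)) := by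
        rw [Real.rpow_neg hb.le, Real.div_rpow ha.le hb.le]
        exact (div_eq_mul_inv _ _).symm

lemma main_eq (k : ℕ) (hk : 3 ≤ k) (φ₁ : SchwartzMap E2 ℂ) (t : ℝ) (m : ℕ) (hm : 1 ≤ m) :
    homInner (1 - 2 / (k : ℝ)) (travWave k φ₁ ((m : ℝ) + 1) t) (travWave k φ₁ (m : ℝ) t)
      = ((((m:ℝ)+1)/(m:ℝ)) ^ (1 - 1/(k:ℝ)) : ℝ) •
        ∫ η : E2, (𝐞 (-⟪η, ((t * Real.sqrt ((m:ℝ)+1)) •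
            (EuclideanSpace.single (0 : Fin 2) (1 : ℝ)) : E2)⟫) : Circle) •
          ((‖η‖ ^ (2 * (1 - 2 / (k : ℝ))) : ℝ) •
            ((SchwartzMap.fourierTransformCLM ℂ φ₁) η *
             conj ((SchwartzMap.fourierTransformCLM ℂ φ₁)
               (((Real.sqrt (m:ℝ))⁻¹ * Real.sqrt ((m:ℝ)+1)) • η)))) := by
  have hc₂ : (0:ℝ) < (m:ℝ) := by exact_mod_cast hm
  have hc₁ : (0:ℝ) < (m:ℝ) + 1 := by linarith
  set c₁ : ℝ := (m:ℝ) + 1 with hc₁def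
  set c₂ : ℝ := (m:ℝ) with hc₂def
  set s : ℝ := 1 - 2/(k:ℝ) with hsdef
  set ψ : SchwartzMap E2 ℂ := SchwartzMap.fourierTransformCLM ℂ φ₁ with hψdef
  have hψ : ⇑ψ = 𝓕 ⇑φ₁ := by rw [hψdef, SchwartzMap.fourierTransformCLM_apply, SchwartzMap.fourier_coe]
  set B₁ : ℝ := c₁ ^ ((1:ℝ)/k) * c₁⁻¹ with hB₁
  set B₂ : ℝ := c₂ ^ ((1:ℝ)/k) * c₂⁻¹ with hB₂
  set Φ : E2 → ℂ := fun ξ => (‖ξ‖ ^ (2*s) : ℝ) • ((𝐞 (-(t * ξ 0)) : Circle) •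
      (ψ ((Real.sqrt c₁)⁻¹ • ξ) * conj (ψ ((Real.sqrt c₂)⁻¹ • ξ)))) with hΦ
  have hA : ∀ ξ : E2, (‖ξ‖ ^ (2*s) : ℝ) •
      (𝓕 (travWave k φ₁ c₁ t) ξ * conj (𝓕 (travWave k φ₁ c₂ t) ξ))
      = (B₁ * B₂ : ℝ) • Φ ξ := by
    intro ξ
    rw [fourier_travWave k φ₁ c₁ t hc₁ ξ, fourier_travWave k φ₁ c₂ t hc₂ ξ]
    have hph : ((𝐞 (-(c₁*t*ξ 0)) : Circle) : ℂ) * conj ((𝐞 (-(c₂*t*ξ 0)) : Circle) : ℂ)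
        = ((𝐞 (-(t*ξ 0)) : Circle) : ℂ) := by
      rw [← Circle.coe_inv_eq_conj, ← AddChar.map_neg_eq_inv, ← Circle.coe_mul,
        ← AddChar.map_add_eq_mul]
      congr 2
      rw [hc₁def, hc₂def]; ring
    rw [hΦ, hB₁, hB₂]
    simp only [Circle.smul_def, Complex.real_smul, map_mul, Complex.conj_ofReal, smul_eq_mul, ← hψ]
    push_cast
    linear_combination ((‖ξ‖ ^ (2*s) : ℝ) : ℂ) * ((c₁ ^ ((1:ℝ)/k) : ℝ) : ℂ) * ((c₁:ℝ) : ℂ)⁻¹ *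
      ((c₂ ^ ((1:ℝ)/k) : ℝ) : ℂ) * ((c₂:ℝ) : ℂ)⁻¹ *
      (ψ ((Real.sqrt c₁)⁻¹ • ξ) * conj (ψ ((Real.sqrt c₂)⁻¹ • ξ))) * hph
  rw [homInner]
  calc (∫ ξ : E2, (‖ξ‖ ^ (2*s) : ℝ) •
        (𝓕 (travWave k φ₁ c₁ t) ξ * conj (𝓕 (travWave k φ₁ c₂ t) ξ)))
      = ∫ ξ : E2, (B₁ * B₂ : ℝ) • Φ ξ := by
        congr 1; ext ξ; exact hA ξ
    _ = (B₁ * B₂ : ℝ) • ∫ ξ : E2, Φ ξ := integral_smul _ _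
    _ = (B₁ * B₂ : ℝ) • ((c₁ : ℝ) • ∫ η : E2, Φ (Real.sqrt c₁ • η)) := by
        have key := MeasureTheory.Measure.integral_comp_smul volume Φ (Real.sqrt c₁)
        simp only [finrank_euclideanSpace, Fintype.card_fin, Real.sq_sqrt hc₁.le] at key
        rw [key, smul_smul, smul_smul, abs_of_nonneg (inv_nonneg.2 hc₁.le)]
        congr 1
        field_simp
    _ = (B₁ * B₂ : ℝ) • ((c₁ : ℝ) • ((Real.sqrt c₁ ^ (2*s) : ℝ) •
          ∫ η : E2, (𝐞 (-⟪η, ((t * Real.sqrt c₁) •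
              (EuclideanSpace.single (0 : Fin 2) (1 : ℝ)) : E2)⟫) : Circle) •
            ((‖η‖ ^ (2*s) : ℝ) •
              (ψ η * conj (ψ (((Real.sqrt c₂)⁻¹ * Real.sqrt c₁) • η)))))) := by
        have hpoint : (fun η : E2 => Φ (Real.sqrt c₁ • η))
            = fun η : E2 => (Real.sqrt c₁ ^ (2*s) : ℝ) •
              ((𝐞 (-⟪η, ((t * Real.sqrt c₁) •
                  (EuclideanSpace.single (0 : Fin 2) (1 : ℝ)) : E2)⟫) : Circle) •
                ((‖η‖ ^ (2*s) : ℝ) •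
                  (ψ η * conj (ψ (((Real.sqrt c₂)⁻¹ * Real.sqrt c₁) • η))))) := by
          funext η
          rw [hΦ]
          have hs1 : (Real.sqrt c₁)⁻¹ • (Real.sqrt c₁ • η) = η := by
            rw [smul_smul, inv_mul_cancel₀ (Real.sqrt_pos.2 hc₁).ne', one_smul]
          have hs2 : (Real.sqrt c₂)⁻¹ • (Real.sqrt c₁ • η)
              = ((Real.sqrt c₂)⁻¹ * Real.sqrt c₁) • η := by rw [smul_smul]
          have hnorm : ‖Real.sqrt c₁ • η‖ ^ (2*s)
              = Real.sqrt c₁ ^ (2*s) * ‖η‖ ^ (2*s) := by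
            rw [norm_smul, Real.norm_eq_abs, abs_of_nonneg (Real.sqrt_nonneg c₁),
              Real.mul_rpow (Real.sqrt_nonneg c₁) (norm_nonneg η)]
          have happ : (Real.sqrt c₁ • η) 0 = Real.sqrt c₁ * η 0 := rfl
          have hinner : ⟪η, ((t * Real.sqrt c₁) •
              (EuclideanSpace.single (0 : Fin 2) (1 : ℝ)) : E2)⟫ = t * (Real.sqrt c₁ * η 0) := by
            rw [real_inner_smul_right, EuclideanSpace.inner_single_right]
            simp [mul_assoc]
          simp only [hs1, hs2, hnorm, happ, hinner]
          rw [mul_smul]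
          rw [smul_comm ((‖η‖ : ℝ) ^ (2*s)) ((𝐞 (-(t * (Real.sqrt c₁ * η 0))) : Circle))]
        rw [hpoint, integral_smul]
    _ = ((((m:ℝ)+1)/(m:ℝ)) ^ (1 - 1/(k:ℝ)) : ℝ) •
        ∫ η : E2, (𝐞 (-⟪η, ((t * Real.sqrt ((m:ℝ)+1)) •
            (EuclideanSpace.single (0 : Fin 2) (1 : ℝ)) : E2)⟫) : Circle) •
          ((‖η‖ ^ (2*s) : ℝ) •
            (ψ η * conj (ψ (((Real.sqrt (m:ℝ))⁻¹ * Real.sqrt ((m:ℝ)+1)) • η)))) := by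
        rw [smul_smul, smul_smul]
        congr 1
        rw [← scalar_id k hk c₁ c₂ hc₁ hc₂, hsdef]
        ring

/-- With `c₁ = m+1`, `c₂ = m`, the `Ḣ^{s_c}` inner product of the two travelling
waves at a fixed time `t > 0` tends to `0` as `m → ∞` (Riemann–Lebesgue). -/
theorem travelling_waves_inner_to_zero (k : ℕ) (hk : 3 ≤ k)
    (φ₁ : SchwartzMap E2 ℂ) (hφ₁ : φ₁ ≠ 0) (t : ℝ) (ht : 0 < t) :
    Tendsto
      (fun m : ℕ => homInner (1 - 2 / (k : ℝ))
        (travWave k φ₁ ((m : ℝ) + 1) t) (travWave k φ₁ (m : ℝ) t))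
      atTop (𝓝 0) := by
  have hkr : (3:ℝ) ≤ (k:ℝ) := by exact_mod_cast hk
  have hs0 : 0 < 1 - 2/(k:ℝ) := by
    have h1 : (2:ℝ)/(k:ℝ) ≤ 2/3 := by
      apply div_le_div_of_nonneg_left (by norm_num) (by norm_num) hkr
    linarith
  have hs1 : 1 - 2/(k:ℝ) ≤ 1 := by
    have : (0:ℝ) ≤ 2/(k:ℝ) := by positivity
    linarith
  set ψ : SchwartzMap E2 ℂ := SchwartzMap.fourierTransformCLM ℂ φ₁ with hψdef
  set w : ℕ → E2 := fun m => (t * Real.sqrt ((m:ℝ)+1)) •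
    (EuclideanSpace.single (0 : Fin 2) (1 : ℝ)) with hwdef
  set ρ : ℕ → ℝ := fun m => (Real.sqrt (m:ℝ))⁻¹ * Real.sqrt ((m:ℝ)+1) with hρdef
  have hsqrt : Tendsto (fun m : ℕ => Real.sqrt ((m:ℝ)+1)) atTop atTop := by
    refine tendsto_atTop.2 fun b => ?_
    filter_upwards [eventually_ge_atTop (⌈b^2⌉₊)] with m hm
    have h1 : b^2 ≤ (m:ℝ) + 1 := by
      have h2 : ((⌈b^2⌉₊ : ℕ) : ℝ) ≤ (m:ℝ) := by exact_mod_cast hm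
      have := Nat.le_ceil (b^2)
      linarith
    calc b ≤ |b| := le_abs_self b
      _ = Real.sqrt (b^2) := (Real.sqrt_sq_eq_abs b).symm
      _ ≤ Real.sqrt ((m:ℝ)+1) := Real.sqrt_le_sqrt h1
  have hw : Tendsto w atTop (cocompact E2) := by
    rw [← Metric.cobounded_eq_cocompact, ← tendsto_norm_atTop_iff_cobounded]
    have : ∀ m : ℕ, ‖w m‖ = t * Real.sqrt ((m:ℝ)+1) := by
      intro m
      rw [hwdef]
      simp only [norm_smul, EuclideanSpace.norm_single, Real.norm_eq_abs, norm_one, mul_one]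
      rw [abs_of_nonneg (by positivity)]
    simp_rw [this]
    exact hsqrt.const_mul_atTop ht
  have hratio : Tendsto (fun m : ℕ => ((m:ℝ)+1)/(m:ℝ)) atTop (𝓝 1) := by
    have h1 : Tendsto (fun m : ℕ => 1 + 1/(m:ℝ)) atTop (𝓝 (1 + 0)) :=
      tendsto_const_nhds.add tendsto_one_div_atTop_nhds_zero_nat
    rw [add_zero] at h1
    refine h1.congr' ?_
    filter_upwards [eventually_ge_atTop 1] with m hm
    have hm0 : (0:ℝ) < (m:ℝ) := by exact_mod_cast hm
    field_simp
  have hρlim : Tendsto ρ atTop (𝓝 1) := by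
    have hcont := (Real.continuous_sqrt.tendsto 1).comp hratio
    rw [Real.sqrt_one] at hcont
    refine Tendsto.congr' ?_ hcont
    filter_upwards [eventually_ge_atTop 1] with m hm
    simp only [Function.comp_apply, hρdef]
    rw [Real.sqrt_div (by positivity : (0:ℝ) ≤ (m:ℝ)+1) (m:ℝ), div_eq_mul_inv, mul_comm]
  have hI := aux_tendsto (1 - 2/(k:ℝ)) hs0 hs1 ψ w hw ρ hρlim
  have hD : Tendsto (fun m : ℕ => ((((m:ℝ)+1)/(m:ℝ)) ^ (1 - 1/(k:ℝ)) : ℝ)) atTop (𝓝 1) := by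
    have := hratio.rpow_const (p := 1 - 1/(k:ℝ)) (Or.inl one_ne_zero)
    simpa [Real.one_rpow] using this
  have hprod := hD.smul hI
  rw [one_smul] at hprod
  refine Tendsto.congr' ?_ hprod
  filter_upwards [eventually_ge_atTop 1] with m hm
  exact (main_eq k hk φ₁ t m hm).symm
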